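/- The distribution with p.g.f. P(z) = exp(-λ((1-z)/(1-(1-q)z))^p) has infinite mean when 0 < p < 1, i.e., lim_{z→1⁻} P'(z) = +∞. -/

import Mathlib

open Real Filter

theorem citation_pgf_infinite_mean (lam p q : ℝ) (hlam : 0 < lam)
    (hp : p ∈ Set.Ioo (0 : ℝ) 1) (hq : q ∈ Set.Ioc (0 : ℝ) 1) :
    Tendsto (deriv fun z : ℝ => Real.exp (-lam * ((1 - z) / (1 - (1 - q) * z)) ^ p))
      (nhdsWithin 1 (Set.Iio 1)) atTop := by
  obtain ⟨hp0, hp1⟩ := hp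
  obtain ⟨hq0, hq1⟩ := hq
  set l := nhdsWithin (1:ℝ) (Set.Iio 1) with hl
  set d : ℝ → ℝ := fun z => 1 - (1 - q) * z with hd
  set u : ℝ → ℝ := fun z => (1 - z) / d z with hu
  set F : ℝ → ℝ := fun z =>
    Real.exp (-lam * (u z) ^ p) * (-lam * (p * (u z) ^ (p - 1) * (-q / (d z) ^ 2))) with hF
  have hdc : Continuous d := by fun_prop
  have hd1 : d 1 = q := by simp [hd]
  -- d z → q
  have hdl : Tendsto d l (nhds q) := by
    have := hdc.tendsto 1
    rw [hd1] at this
    exact this.mono_left nhdsWithin_le_nhds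
  have hdpos : ∀ᶠ z in l, 0 < d z := hdl.eventually (eventually_gt_nhds hq0)
  have hzlt : ∀ᶠ z in l, z < 1 := eventually_mem_nhdsWithin
  have hupos : ∀ᶠ z in l, 0 < u z := by
    filter_upwards [hdpos, hzlt] with z h1 h2
    exact div_pos (by linarith) h1
  -- u → 0
  have hul : Tendsto u l (nhds 0) := by
    have h1 : Tendsto (fun z : ℝ => 1 - z) l (nhds 0) := by
      have : Tendsto (fun z : ℝ => 1 - z) (nhds 1) (nhds (1 - 1)) :=
        (continuous_const.sub continuous_id).tendsto 1
      simpa using this.mono_left nhdsWithin_le_nhds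
    have := h1.div hdl (ne_of_gt hq0)
    rw [zero_div] at this; exact this
  have hul' : Tendsto u l (nhdsWithin 0 (Set.Ioi 0)) :=
    tendsto_nhdsWithin_iff.2 ⟨hul, hupos⟩
  -- the key derivative computation
  have hderiv : ∀ᶠ z in l, deriv (fun z : ℝ =>
      Real.exp (-lam * ((1 - z) / (1 - (1 - q) * z)) ^ p)) z = F z := by
    filter_upwards [hdpos, hzlt] with z h1 h2
    have hdz : d z ≠ 0 := ne_of_gt h1
    have huz : u z ≠ 0 := ne_of_gt (div_pos (by linarith) h1)
    have hden : HasDerivAt d (-(1 - q)) z := by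
      exact ((hasDerivAt_const z (1:ℝ)).sub ((hasDerivAt_id' z).const_mul (1 - q))).congr_deriv (by ring)
    have hnum : HasDerivAt (fun z : ℝ => 1 - z) (-1) z := by
      exact ((hasDerivAt_const z (1:ℝ)).sub (hasDerivAt_id' z)).congr_deriv (by ring)
    have hudz : HasDerivAt u (-q / (d z) ^ 2) z := by
      have := hnum.div hden hdz
      refine this.congr_deriv ?_
      congr 1
      simp only [hd]
      ring
    have hrp : HasDerivAt (fun z => (u z) ^ p) (p * (u z) ^ (p - 1) * (-q / (d z) ^ 2)) z :=
      (Real.hasDerivAt_rpow_const (Or.inl huz)).comp z hudz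
    have hfin : HasDerivAt (fun z : ℝ => Real.exp (-lam * (u z) ^ p)) (F z) z :=
      (hrp.const_mul (-lam)).exp
    exact hfin.deriv
  rw [tendsto_congr' hderiv]
  -- F z = u z ^ (p-1) * G z
  set G : ℝ → ℝ := fun z => Real.exp (-lam * (u z) ^ p) * (lam * p * q / (d z) ^ 2) with hG
  have hFG : ∀ z, F z = (u z) ^ (p - 1) * G z := by
    intro z; simp only [hF, hG]; ring
  have hGl : Tendsto G l (nhds (lam * p * q / q ^ 2)) := by
    have hup : Tendsto (fun z => (u z) ^ p) l (nhds 0) := by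
      have hc : ContinuousAt (fun x : ℝ => x ^ p) 0 :=
        Real.continuousAt_rpow_const 0 p (Or.inr hp0.le)
      have := hc.tendsto.comp hul
      simpa [Real.zero_rpow (ne_of_gt hp0), Function.comp_def] using this
    have hexp : Tendsto (fun z => Real.exp (-lam * (u z) ^ p)) l (nhds 1) := by
      have h0 : Tendsto (fun z => -lam * (u z) ^ p) l (nhds 0) := by
        simpa using hup.const_mul (-lam)
      have := (Real.continuous_exp.tendsto 0).comp h0
      rw [Real.exp_zero] at this
      exact this
    have hd2 : Tendsto (fun z => lam * p * q / (d z) ^ 2) l (nhds (lam * p * q / q ^ 2)) := by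
      exact (tendsto_const_nhds.div (hdl.pow 2) (by positivity))
    simpa [hG] using hexp.mul hd2
  have hU : Tendsto (fun z => (u z) ^ (p - 1)) l atTop := by
    have h1 : Tendsto (fun x : ℝ => (x⁻¹) ^ (1 - p)) (nhdsWithin 0 (Set.Ioi 0)) atTop :=
      (tendsto_rpow_atTop (by linarith)).comp tendsto_inv_nhdsGT_zero
    have h2 := h1.comp hul'
    apply h2.congr'
    filter_upwards [hupos] with z hz
    have : (u z)⁻¹ ^ (1 - p) = (u z) ^ (p - 1) := by
      rw [Real.inv_rpow hz.le, ← Real.rpow_neg hz.le]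
      ring_nf
    simpa [Function.comp] using this
  have := hU.atTop_mul_pos (by positivity : (0:ℝ) < lam * p * q / q ^ 2) hGl
  exact this.congr (fun z => (hFG z).symm)
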